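/- Assuming the bound π(x) < (x/ln x)(1 + 3/(2 ln x)) for all real x > 1: any collection of pairwise relatively prime natural numbers, each greater than 1 and not exceeding n, with at least (2√n / ln n)(1 + 3/ln n) + 1 elements, contains at least one prime. -/

import Mathlib

theorem stmt_9
    (hRS : ∀ x : ℝ, 1 < x →
      (Nat.primeCounting ⌊x⌋₊ : ℝ) < x / Real.log x * (1 + 3 / (2 * Real.log x)))
    (k n : ℕ) (a : Fin k → ℕ) (h1 : ∀ i, 1 < a i) (hle : ∀ i, a i ≤ n)
    (hcop : ∀ i j, i ≠ j → Nat.Coprime (a i) (a j))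
    (hk : 2 * Real.sqrt n / Real.log n * (1 + 3 / Real.log n) + 1 ≤ (k : ℝ)) :
    ∃ i, (a i).Prime := by
  by_contra hcon
  push_neg at hcon
  -- k ≥ 1
  have hterm : (0 : ℝ) ≤ 2 * Real.sqrt n / Real.log n * (1 + 3 / Real.log n) := by
    rcases le_or_gt (Real.log n) 0 with h | h
    · have hn1 : (n : ℝ) ≤ 1 := by
        by_contra hh
        push_neg at hh
        exact absurd (Real.log_pos hh) (not_lt.mpr h)
      have hn1' : n ≤ 1 := by exact_mod_cast hn1
      interval_cases n <;> simp
    · positivity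
  have hk1 : 1 ≤ k := by
    by_contra hh
    push_neg at hh
    interval_cases k
    simp at hk
    linarith
  have hn2 : 2 ≤ n := le_trans (h1 ⟨0, hk1⟩) (hle ⟨0, hk1⟩)
  have hnR : (1 : ℝ) < n := by exact_mod_cast lt_of_lt_of_le one_lt_two (by exact_mod_cast hn2)
  have hlogpos : 0 < Real.log n := Real.log_pos hnR
  have hsq1 : (1 : ℝ) < Real.sqrt n := by
    rw [show (1:ℝ) = Real.sqrt 1 by simp]
    exact Real.sqrt_lt_sqrt zero_le_one hnR
  -- upper bound on π(sqrt n)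
  have hbound := hRS (Real.sqrt n) hsq1
  rw [Real.log_sqrt (by positivity)] at hbound
  have heq : Real.sqrt n / (Real.log n / 2) * (1 + 3 / (2 * (Real.log n / 2)))
      = 2 * Real.sqrt n / Real.log n * (1 + 3 / Real.log n) := by
    field_simp
  rw [heq, Real.nat_floor_real_sqrt_eq_nat_sqrt] at hbound
  -- lower bound: k ≤ π(sqrt n)
  have hcount : k ≤ Nat.primeCounting (Nat.sqrt n) := by
    have hmem : ∀ i : Fin k, (a i).minFac ∈
        (Finset.range (Nat.sqrt n + 1)).filter Nat.Prime := by
      intro i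
      have hp : ((a i).minFac).Prime := Nat.minFac_prime (h1 i).ne'
      have hsle : (a i).minFac ≤ Nat.sqrt n := by
        rw [Nat.le_sqrt']
        exact le_trans (Nat.minFac_sq_le_self (lt_trans Nat.zero_lt_one (h1 i)) (hcon i)) (hle i)
      simp [Finset.mem_filter, Finset.mem_range, hp, Nat.lt_succ_of_le hsle]
    have hinj : Function.Injective (fun i : Fin k => (a i).minFac) := by
      intro i j hij
      by_contra hne
      have hcp := hcop i j hne
      have hij' : (a i).minFac = (a j).minFac := hij
      have h1' : (a i).minFac ∣ Nat.gcd (a i) (a j) :=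
        Nat.dvd_gcd (Nat.minFac_dvd _) (hij' ▸ Nat.minFac_dvd (a j))
      rw [hcp] at h1'
      exact (Nat.minFac_prime (h1 i).ne').ne_one (Nat.eq_one_of_dvd_one h1')
    calc k = (Finset.univ : Finset (Fin k)).card := by simp
      _ ≤ ((Finset.range (Nat.sqrt n + 1)).filter Nat.Prime).card :=
          Finset.card_le_card_of_injOn _ (fun i _ => hmem i) (hinj.injOn)
      _ = Nat.primeCounting (Nat.sqrt n) := by
          rw [Nat.primeCounting, Nat.primeCounting', Nat.count_eq_card_filter_range]
  have : (k : ℝ) ≤ Nat.primeCounting (Nat.sqrt n) := by exact_mod_cast hcount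
  linarith
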